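/- arXiv:math/0202191 — 4 statements merged into one kernel-verified Lean document; each statement's English description precedes it below -/
import Mathlib

section
/- For every integer D ≥ 1 and every real N ≥ 0, the cardinality ε_{D,N} of the set E_{D,N} = {α algebraic : [ℚ(α):ℚ] ≤ D and h(α) ≤ N} satisfies ε_{D,N} ≤ e^{D(D+1)(N+1)}. -/
open Polynomial

/-- The positive leading coefficient of the primitive integer minimal polynomial of `α`:
the least positive integer `n` such that `n • minpoly ℚ α` has integer coefficients. -/
noncomputable def algDenom (α : ℂ) : ℕ :=
  sInf {n : ℕ | 0 < n ∧ ∃ q : Polynomial ℤ,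
    q.map (Int.castRingHom ℚ) = (n : ℚ) • minpoly ℚ α}

/-- The Mahler measure of (the integer minimal polynomial of) the algebraic number `α`. -/
noncomputable def mahlerMeasure (α : ℂ) : ℝ :=
  (algDenom α : ℝ) *
    (((minpoly ℚ α).map (algebraMap ℚ ℂ)).roots.map
      (fun z => max 1 ‖z‖)).prod

/-- The degree of an algebraic number `α` over `ℚ`. -/
noncomputable def degAlg (α : ℂ) : ℕ := (minpoly ℚ α).natDegree

/-- The absolute logarithmic Weil height of an algebraic number `α`. -/
noncomputable def height (α : ℂ) : ℝ :=
  (1 / (degAlg α : ℝ)) * Real.log (mahlerMeasure α)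

/-- The set of algebraic numbers of degree at most `D` and height at most `N`. -/
def setE (D : ℕ) (N : ℝ) : Set ℂ :=
  {α : ℂ | IsAlgebraic ℚ α ∧ degAlg α ≤ D ∧ height α ≤ N}


lemma algDenom_setNonempty {α : ℂ} :
    {n : ℕ | 0 < n ∧ ∃ q : Polynomial ℤ,
      q.map (Int.castRingHom ℚ) = (n : ℚ) • minpoly ℚ α}.Nonempty := by
  obtain ⟨b, hbM, hb⟩ := @IsLocalization.integerNormalization_spec ℤ _ (nonZeroDivisors ℤ) ℚ _ _ _
    (minpoly ℚ α)
  have hb0 : (b : ℤ) ≠ 0 := nonZeroDivisors.ne_zero hbM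
  rcases le_or_gt 0 (b : ℤ) with h | h
  · refine ⟨(b : ℤ).toNat, ⟨by omega, IsLocalization.integerNormalization (nonZeroDivisors ℤ) (minpoly ℚ α), ?_⟩⟩
    ext i
    rw [coeff_map, coeff_smul]
    have := congrArg (fun p => coeff p i) hb
    simp only [coeff_map, coeff_smul] at this
    rw [algebraMap_int_eq] at this
    rw [this, zsmul_eq_mul, smul_eq_mul]
    congr 1
    exact_mod_cast (Int.toNat_of_nonneg h).symm
  · refine ⟨(-(b : ℤ)).toNat, ⟨by omega, -(IsLocalization.integerNormalization (nonZeroDivisors ℤ) (minpoly ℚ α)), ?_⟩⟩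
    ext i
    rw [coeff_map, coeff_neg, coeff_smul]
    have := congrArg (fun p => coeff p i) hb
    simp only [coeff_map, coeff_smul] at this
    rw [algebraMap_int_eq] at this
    rw [map_neg, this, zsmul_eq_mul, smul_eq_mul, ← neg_mul]
    congr 1
    exact_mod_cast (Int.toNat_of_nonneg (by omega : (0:ℤ) ≤ -(b:ℤ))).symm

lemma algDenom_mem (α : ℂ) : 0 < algDenom α ∧ ∃ q : Polynomial ℤ,
    q.map (Int.castRingHom ℚ) = (algDenom α : ℚ) • minpoly ℚ α :=
  Nat.sInf_mem algDenom_setNonempty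

noncomputable def intMinPoly (α : ℂ) : Polynomial ℤ :=
  ((algDenom_mem α).2).choose

lemma intMinPoly_map (α : ℂ) :
    (intMinPoly α).map (Int.castRingHom ℚ) = (algDenom α : ℚ) • minpoly ℚ α :=
  ((algDenom_mem α).2).choose_spec

lemma algDenom_pos (α : ℂ) : 0 < algDenom α := (algDenom_mem α).1


section
variable {α : ℂ} (hα : IsAlgebraic ℚ α)
include hα
set_option linter.unusedSectionVars false

lemma degAlg_pos : 0 < degAlg α := minpoly.natDegree_pos hα.isIntegral

lemma intMinPoly_natDegree : (intMinPoly α).natDegree = degAlg α := by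
  have h1 : ((intMinPoly α).map (Int.castRingHom ℚ)).natDegree = (intMinPoly α).natDegree :=
    natDegree_map_eq_of_injective (fun a b hab => Int.cast_injective (α := ℚ) (by simpa using hab)) _
  rw [intMinPoly_map α] at h1
  rw [← h1, smul_eq_C_mul, natDegree_C_mul
    (by exact_mod_cast (algDenom_pos α).ne' : ((algDenom α : ℚ)) ≠ 0)]
  rfl

lemma intMinPoly_coeff_deg : (intMinPoly α).coeff (degAlg α) = algDenom α := by
  have h := congrArg (fun p => coeff p (degAlg α)) (intMinPoly_map α)
  simp only [coeff_map, coeff_smul, smul_eq_mul] at h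
  have hm : (minpoly ℚ α).coeff (degAlg α) = 1 := (minpoly.monic hα.isIntegral).coeff_natDegree
  rw [hm, mul_one, eq_intCast] at h
  exact_mod_cast h

lemma intMinPoly_map_complex :
    (intMinPoly α).map (Int.castRingHom ℂ) =
      C ((algDenom α : ℂ)) * (minpoly ℚ α).map (algebraMap ℚ ℂ) := by
  have hcomp : (Int.castRingHom ℂ) = (algebraMap ℚ ℂ).comp (Int.castRingHom ℚ) := by
    refine RingHom.ext_int _ _
  rw [hcomp, ← map_map, intMinPoly_map, smul_eq_C_mul, Polynomial.map_mul, map_C]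
  norm_num

lemma minpoly_map_eq_prod :
    (minpoly ℚ α).map (algebraMap ℚ ℂ) =
      (((minpoly ℚ α).map (algebraMap ℚ ℂ)).roots.map fun r => X - C r).prod :=
  (IsAlgClosed.splits _).eq_prod_roots_of_monic ((minpoly.monic hα.isIntegral).map _)

lemma card_roots_minpoly :
    Multiset.card (((minpoly ℚ α).map (algebraMap ℚ ℂ)).roots) = degAlg α := by
  have hs := (splits_iff_card_roots (f := (minpoly ℚ α).map (algebraMap ℚ ℂ))).mp
    (IsAlgClosed.splits _)
  rw [hs, natDegree_map]
  rfl

lemma intMinPoly_eval_zero :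
    ((intMinPoly α).map (Int.castRingHom ℂ)).eval α = 0 := by
  rw [intMinPoly_map_complex hα, eval_mul, eval_map, ← aeval_def, minpoly.aeval, mul_zero]

end

lemma sum_le_card_mul (m : Multiset ℝ) (B : ℝ) (hB : 0 ≤ B) (h : ∀ x ∈ m, x ≤ B) :
    m.sum ≤ (Multiset.card m) * B := by
  induction m using Multiset.induction_on with
  | empty => simp
  | cons a t ih =>
    simp only [Multiset.sum_cons, Multiset.card_cons]
    have h1 : a ≤ B := h a (Multiset.mem_cons_self a t)
    have h2 : t.sum ≤ (Multiset.card t) * B := ih (fun x hx => h x (Multiset.mem_cons_of_mem hx))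
    push_cast
    nlinarith

lemma one_le_prodMax (s : Multiset ℂ) :
    1 ≤ (s.map fun z => max 1 (‖z‖)).prod :=
  by
  induction s using Multiset.induction_on with
  | empty => simp
  | cons a t ih =>
    simp only [Multiset.map_cons, Multiset.prod_cons]
    nlinarith [le_max_left (1:ℝ) (‖a‖)]

lemma one_le_mahler (α : ℂ) : 1 ≤ mahlerMeasure α := by
  rw [_root_.mahlerMeasure]
  have h1 : (1:ℝ) ≤ algDenom α := by exact_mod_cast algDenom_pos α
  nlinarith [one_le_prodMax (((minpoly ℚ α).map (algebraMap ℚ ℂ)).roots)]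

lemma prod_abs_le_prodMax {t s : Multiset ℂ} (h : t ≤ s) :
    (t.map fun z => ‖z‖).prod ≤ (s.map fun z => max 1 (‖z‖)).prod := by
  obtain ⟨u, rfl⟩ := Multiset.le_iff_exists_add.mp h
  rw [Multiset.map_add, Multiset.prod_add]
  have h1 : ∀ t : Multiset ℂ,
      (t.map fun z => ‖z‖).prod ≤ (t.map fun z => max 1 (‖z‖)).prod := by
    intro t
    induction t using Multiset.induction_on with
    | empty => simp
    | cons a t ih =>
      simp only [Multiset.map_cons, Multiset.prod_cons]
      refine mul_le_mul (le_max_right _ _) ih (Multiset.prod_nonneg ?_)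
        (le_trans zero_le_one (le_max_left _ _))
      intro x hx
      obtain ⟨z, _, rfl⟩ := Multiset.mem_map.mp hx
      exact norm_nonneg _
  calc (t.map fun z => ‖z‖).prod
      ≤ (t.map fun z => max 1 (‖z‖)).prod := h1 t
    _ ≤ (t.map fun z => max 1 (‖z‖)).prod *
        (u.map fun z => max 1 (‖z‖)).prod := by
        nlinarith [one_le_prodMax t, one_le_prodMax u]

lemma abs_esymm_le (s : Multiset ℂ) (k : ℕ) :
    ‖s.esymm k‖ ≤ ((Multiset.card s).choose k : ℝ) *
      (s.map fun z => max 1 (‖z‖)).prod := by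
  rw [Multiset.esymm]
  set P : ℝ := (s.map fun z => max 1 (‖z‖)).prod with hP
  have hP0 : 0 ≤ P := le_trans zero_le_one (one_le_prodMax s)
  calc ‖((s.powersetCard k).map Multiset.prod).sum‖
      ≤ ((((s.powersetCard k).map Multiset.prod)).map norm).sum :=
        Multiset.le_sum_of_subadditive norm norm_zero.le norm_add_le _
    _ ≤ (Multiset.card (((s.powersetCard k).map Multiset.prod).map norm)) * P := by
        refine sum_le_card_mul _ _ hP0 ?_
        intro x hx
        simp only [Multiset.map_map, Multiset.mem_map, Function.comp_apply] at hx
        obtain ⟨t, ht, rfl⟩ := hx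
        have hts : t ≤ s := (Multiset.mem_powersetCard.mp ht).1
        calc ‖t.prod‖ = (t.map fun z => ‖z‖).prod :=
              map_multiset_prod normHom t
          _ ≤ P := prod_abs_le_prodMax hts
    _ = ((Multiset.card s).choose k : ℝ) * P := by
        rw [Multiset.card_map, Multiset.card_map, Multiset.card_powersetCard]

lemma choose_le_two_pow (d k : ℕ) : d.choose k ≤ 2 ^ d := by
  rcases le_or_gt k d with h | h
  · calc d.choose k ≤ ∑ m ∈ Finset.range (d+1), d.choose m :=
        Finset.single_le_sum (fun i _ => Nat.zero_le _) (Finset.mem_range.mpr (by omega))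
      _ = 2 ^ d := Nat.sum_range_choose d
  · rw [Nat.choose_eq_zero_of_lt h]; exact Nat.zero_le _

lemma intMinPoly_coeff_abs_le {α : ℂ} (hα : IsAlgebraic ℚ α) (i : ℕ) :
    |((intMinPoly α).coeff i : ℝ)| ≤ 2 ^ degAlg α * mahlerMeasure α := by
  have hM1 : 1 ≤ mahlerMeasure α := one_le_mahler α
  rcases le_or_gt i (degAlg α) with hi | hi
  · set R : Multiset ℂ := ((minpoly ℚ α).map (algebraMap ℚ ℂ)).roots with hR
    set P : ℝ := (R.map fun z => max 1 (‖z‖)).prod with hPdef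
    have hP0 : 0 ≤ P := le_trans zero_le_one (one_le_prodMax R)
    have hcard : Multiset.card R = degAlg α := card_roots_minpoly hα
    have hC := congrArg (fun p => coeff p i) (intMinPoly_map_complex hα)
    simp only [coeff_C_mul] at hC
    have hco : ((minpoly ℚ α).map (algebraMap ℚ ℂ)).coeff i =
        (-1) ^ (degAlg α - i) * R.esymm (degAlg α - i) := by
      conv_lhs => rw [minpoly_map_eq_prod hα]
      rw [Multiset.prod_X_sub_C_coeff R (by rw [hcard]; exact hi), hcard]
    rw [hco, coeff_map, eq_intCast] at hC
    have habs : |((intMinPoly α).coeff i : ℝ)|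
        = ‖(((intMinPoly α).coeff i : ℂ))‖ := by
      rw [Complex.norm_intCast]
    rw [habs, hC]
    rw [norm_mul, norm_mul, norm_pow]
    simp only [norm_neg, norm_one, one_pow, one_mul]
    have h1 : ‖((algDenom α : ℂ))‖ = (algDenom α : ℝ) := by
      rw [Complex.norm_natCast]
    rw [h1]
    have h2 : ‖R.esymm (degAlg α - i)‖
        ≤ ((Multiset.card R).choose (degAlg α - i) : ℝ) * P := abs_esymm_le R _
    have h3 : ((Multiset.card R).choose (degAlg α - i) : ℝ) ≤ 2 ^ degAlg α := by
      rw [hcard]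
      exact_mod_cast choose_le_two_pow (degAlg α) (degAlg α - i)
    have hn0 : (0:ℝ) ≤ (algDenom α : ℝ) := Nat.cast_nonneg _
    have hmm : mahlerMeasure α = (algDenom α : ℝ) * P := rfl
    rw [hmm]
    calc (algDenom α : ℝ) * ‖R.esymm (degAlg α - i)‖
        ≤ (algDenom α : ℝ) * (((Multiset.card R).choose (degAlg α - i) : ℝ) * P) :=
          mul_le_mul_of_nonneg_left h2 hn0
      _ ≤ (algDenom α : ℝ) * ((2 ^ degAlg α : ℝ) * P) := by
          refine mul_le_mul_of_nonneg_left (mul_le_mul_of_nonneg_right h3 hP0) hn0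
      _ = 2 ^ degAlg α * ((algDenom α : ℝ) * P) := by ring
  · have h0 : (intMinPoly α).coeff i = 0 :=
      coeff_eq_zero_of_natDegree_lt (by rw [intMinPoly_natDegree hα]; exact hi)
    rw [h0]
    simp only [Int.cast_zero, abs_zero]
    positivity

lemma mahler_le_exp {α : ℂ} {D : ℕ} {N : ℝ} (hmem : α ∈ setE D N) (hN : 0 ≤ N) :
    mahlerMeasure α ≤ Real.exp (D * N) := by
  obtain ⟨hα, hdeg, hht⟩ := hmem
  have hM1 : 1 ≤ mahlerMeasure α := one_le_mahler α
  have hd : 0 < (degAlg α : ℝ) := by exact_mod_cast degAlg_pos hα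
  rw [height] at hht
  have hlog : Real.log (mahlerMeasure α) ≤ (degAlg α : ℝ) * N := by
    have h := mul_le_mul_of_nonneg_left hht hd.le
    rw [mul_comm (1 / (degAlg α : ℝ)) _, ← mul_assoc] at h
    field_simp at h
    linarith [h]
  calc mahlerMeasure α = Real.exp (Real.log (mahlerMeasure α)) :=
        (Real.exp_log (by linarith)).symm
    _ ≤ Real.exp ((D : ℝ) * N) := by
        refine Real.exp_le_exp.mpr (le_trans hlog ?_)
        have : (degAlg α : ℝ) ≤ D := by exact_mod_cast hdeg
        nlinarith

lemma keyNum (D : ℕ) (hD : 1 ≤ D) :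
    (D:ℝ) * 3 ^ D * 2 ^ (D * D) ≤ Real.exp ((D:ℝ) * ((D:ℝ) + 1)) := by
  have hDR : (1:ℝ) ≤ (D:ℝ) := by exact_mod_cast hD
  have hpos : (0:ℝ) < (D:ℝ) * 3 ^ D * 2 ^ (D * D) := by positivity
  rw [← Real.exp_log hpos, Real.exp_le_exp]
  rw [Real.log_mul (by positivity) (by positivity),
    Real.log_mul (by positivity) (by positivity), Real.log_pow, Real.log_pow]
  have hlog2 : Real.log 2 < 0.6931471808 := Real.log_two_lt_d9
  have hlog2' : (0:ℝ) < Real.log 2 := Real.log_pos (by norm_num)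
  have hlog32 : Real.log 3 ≤ Real.log 2 + 1/2 := by
    have h32 : Real.log (3/2 : ℝ) ≤ 3/2 - 1 := Real.log_le_sub_one_of_pos (by norm_num)
    have h3 : Real.log (3:ℝ) = Real.log 2 + Real.log (3/2) := by
      rw [← Real.log_mul (by norm_num) (by norm_num)]; norm_num
    linarith
  rcases eq_or_lt_of_le hD with h1 | h2
  · have hD1 : D = 1 := h1.symm
    subst hD1
    push_cast
    simp only [Real.log_one]
    nlinarith
  · have hD2 : (2:ℝ) ≤ (D:ℝ) := by exact_mod_cast h2
    have he : (2.7182818283:ℝ) < Real.exp 1 := Real.exp_one_gt_d9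
    have hlogD : Real.log (D:ℝ) ≤ (D:ℝ) * 0.368 := by
      have h := Real.log_le_sub_one_of_pos
        (show (0:ℝ) < (D:ℝ)/Real.exp 1 by positivity)
      rw [Real.log_div (by positivity) (Real.exp_ne_zero 1), Real.log_exp] at h
      have hdiv : (D:ℝ)/Real.exp 1 ≤ (D:ℝ)/2.7182818283 :=
        div_le_div_of_nonneg_left (by linarith) (by norm_num) he.le
      have hdiv2 : (D:ℝ)/2.7182818283 ≤ (D:ℝ) * 0.368 := by
        rw [div_le_iff₀ (by norm_num)]
        nlinarith
      linarith
    push_cast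
    nlinarith [mul_le_mul_of_nonneg_left hD2 (by positivity : (0:ℝ) ≤ 0.3068 * (D:ℝ))]

theorem E_card_upper (D : ℕ) (hD : 1 ≤ D) (N : ℝ) (hN : 0 ≤ N) :
    ((setE D N).ncard : ℝ) ≤ Real.exp (D * (D + 1) * (N + 1)) := by
  classical
  rcases (setE D N).finite_or_infinite with hfin | hinf
  swap
  · rw [hinf.ncard]
    simpa using (Real.exp_pos (D * (D + 1) * (N + 1))).le
  set Mr : ℝ := Real.exp (D * N) with hMrdef
  have hMr1 : (1:ℝ) ≤ Mr := Real.one_le_exp (by positivity)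
  have h2D : (1:ℝ) ≤ 2 ^ D := by
    have := pow_le_pow_right₀ (by norm_num : (1:ℝ) ≤ 2) (Nat.zero_le D)
    simpa using this
  set m : ℤ := ⌊Mr⌋ with hmdef
  set c : ℤ := ⌊(2:ℝ)^D * Mr⌋ with hcdef
  have hm1 : 1 ≤ m := Int.le_floor.mpr (by exact_mod_cast hMr1)
  have hcMr1 : (1:ℝ) ≤ 2^D * Mr := by nlinarith
  have hc1 : 1 ≤ c := Int.le_floor.mpr (by exact_mod_cast hcMr1)
  set φ : ℂ → (Fin (D+1) → ℤ) :=
    fun α i => (intMinPoly α * X ^ (D - degAlg α)).coeff i with hφdef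
  set T : Finset (Fin (D+1) → ℤ) :=
    Fintype.piFinset (fun i => if (i:ℕ) = D then Finset.Icc 1 m else Finset.Icc (-c) c)
      with hTdef
  -- basic facts
  have hne : ∀ {α : ℂ}, IsAlgebraic ℚ α → intMinPoly α ≠ 0 := by
    intro α hα h0
    have h := intMinPoly_coeff_deg hα
    rw [h0, coeff_zero] at h
    exact (algDenom_pos α).ne' (by exact_mod_cast h.symm)
  have hshne : ∀ {α : ℂ}, IsAlgebraic ℚ α → intMinPoly α * X ^ (D - degAlg α) ≠ 0 :=
    fun hα => mul_ne_zero (hne hα) (pow_ne_zero _ X_ne_zero)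
  have hdegsh : ∀ {α : ℂ}, IsAlgebraic ℚ α → degAlg α ≤ D →
      (intMinPoly α * X ^ (D - degAlg α)).natDegree = D := by
    intro α hα hdeg
    rw [natDegree_mul_X_pow _ (hne hα), intMinPoly_natDegree hα]
    omega
  have hrootsh : ∀ {α : ℂ}, IsAlgebraic ℚ α →
      ((intMinPoly α * X ^ (D - degAlg α)).map (Int.castRingHom ℂ)).eval α = 0 := by
    intro α hα
    rw [Polynomial.map_mul, eval_mul, intMinPoly_eval_zero hα, zero_mul]
  have hcoeq : ∀ {α β : ℂ}, α ∈ setE D N → β ∈ setE D N → φ α = φ β →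
      intMinPoly α * X ^ (D - degAlg α) = intMinPoly β * X ^ (D - degAlg β) := by
    intro α β hαm hβm hφeq
    ext j
    rcases le_or_gt j D with hj | hj
    · have h := congrFun hφeq ⟨j, by omega⟩
      simpa [hφdef] using h
    · rw [coeff_eq_zero_of_natDegree_lt, coeff_eq_zero_of_natDegree_lt]
      · rw [hdegsh hβm.1 hβm.2.1]; exact hj
      · rw [hdegsh hαm.1 hαm.2.1]; exact hj
  -- membership in T
  have hmaps : ∀ α ∈ hfin.toFinset, φ α ∈ T := by
    intro α hαF
    rw [Set.Finite.mem_toFinset] at hαF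
    obtain ⟨hα, hdeg, hht⟩ := hαF
    have hMle : mahlerMeasure α ≤ Mr := mahler_le_exp ⟨hα, hdeg, hht⟩ hN
    have hM1 : (1:ℝ) ≤ mahlerMeasure α := one_le_mahler α
    have hcoeff : ∀ j : ℕ, |((intMinPoly α).coeff j : ℝ)| ≤ 2^D * Mr := by
      intro j
      refine le_trans (intMinPoly_coeff_abs_le hα j) ?_
      have h2 : (2:ℝ)^(degAlg α) ≤ 2^D := pow_le_pow_right₀ (by norm_num) hdeg
      nlinarith
    have hcoeffsh : ∀ j : ℕ,
        |((intMinPoly α * X ^ (D - degAlg α)).coeff j : ℝ)| ≤ 2^D * Mr := by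
      intro j
      rw [coeff_mul_X_pow']
      split_ifs with h
      · exact hcoeff _
      · simp only [Int.cast_zero, abs_zero]
        positivity
    rw [hTdef, Fintype.mem_piFinset]
    intro i
    by_cases hiD : (i:ℕ) = D
    · rw [if_pos hiD]
      have hcd : (intMinPoly α * X ^ (D - degAlg α)).coeff (i:ℕ)
          = ((algDenom α : ℕ) : ℤ) := by
        rw [coeff_mul_X_pow', if_pos (show D - degAlg α ≤ (i:ℕ) by omega), hiD]
        have h9 : D - (D - degAlg α) = degAlg α := by omega
        rw [h9, intMinPoly_coeff_deg hα]
      show (intMinPoly α * X ^ (D - degAlg α)).coeff (i:ℕ) ∈ Finset.Icc (1:ℤ) m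
      rw [hcd, Finset.mem_Icc]
      refine ⟨by exact_mod_cast algDenom_pos α, Int.le_floor.mpr ?_⟩
      have hP1 : (1:ℝ) ≤ (((minpoly ℚ α).map (algebraMap ℚ ℂ)).roots.map
          (fun z => max 1 (‖z‖))).prod := one_le_prodMax _
      have hmm : mahlerMeasure α = (algDenom α : ℝ) *
          (((minpoly ℚ α).map (algebraMap ℚ ℂ)).roots.map
            (fun z => max 1 (‖z‖))).prod := rfl
      have hnn : (0:ℝ) ≤ (algDenom α : ℝ) := Nat.cast_nonneg _
      have : (algDenom α : ℝ) ≤ mahlerMeasure α := by nlinarith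
      push_cast
      linarith
    · rw [if_neg hiD]
      show (intMinPoly α * X ^ (D - degAlg α)).coeff (i:ℕ) ∈ Finset.Icc (-c) c
      rw [Finset.mem_Icc]
      have hb := hcoeffsh (i:ℕ)
      rw [abs_le] at hb
      constructor
      · rw [neg_le]
        refine Int.le_floor.mpr ?_
        push_cast
        linarith [hb.1]
      · refine Int.le_floor.mpr ?_
        push_cast
        linarith [hb.2]
  -- fiber bound
  have hfib : ∀ v ∈ T, (hfin.toFinset.filter (fun α => φ α = v)).card ≤ D := by
    intro v _
    rcases Finset.eq_empty_or_nonempty (hfin.toFinset.filter (fun α => φ α = v)) with he | hne'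
    · rw [he, Finset.card_empty]; omega
    obtain ⟨α₀, hα₀⟩ := hne'
    have hα₀' := hα₀
    rw [Finset.mem_filter, Set.Finite.mem_toFinset] at hα₀'
    obtain ⟨hα₀mem, hφ₀⟩ := hα₀'
    set p₀ : Polynomial ℂ :=
      (intMinPoly α₀ * X ^ (D - degAlg α₀)).map (Int.castRingHom ℂ) with hp₀
    have hinj : Function.Injective (Int.castRingHom ℂ) :=
      fun a b hab => Int.cast_injective (α := ℂ) (by simpa using hab)
    have hp₀ne : p₀ ≠ 0 := by
      rw [hp₀, Ne, Polynomial.map_eq_zero_iff hinj]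
      exact hshne hα₀mem.1
    have hsub : (hfin.toFinset.filter (fun α => φ α = v)) ⊆ p₀.roots.toFinset := by
      intro β hβ
      rw [Finset.mem_filter, Set.Finite.mem_toFinset] at hβ
      obtain ⟨hβmem, hφβ⟩ := hβ
      rw [Multiset.mem_toFinset, mem_roots hp₀ne]
      have heq := hcoeq hα₀mem hβmem (hφ₀.trans hφβ.symm)
      show p₀.eval β = 0
      rw [hp₀, heq]
      exact hrootsh hβmem.1
    calc (hfin.toFinset.filter (fun α => φ α = v)).card
        ≤ p₀.roots.toFinset.card := Finset.card_le_card hsub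
      _ ≤ Multiset.card p₀.roots := Multiset.toFinset_card_le _
      _ ≤ p₀.natDegree := card_roots' p₀
      _ ≤ D := by
          rw [hp₀, natDegree_map_eq_of_injective hinj, hdegsh hα₀mem.1 hα₀mem.2.1]
  -- counting
  have hcount : hfin.toFinset.card ≤ D * T.card :=
    Finset.card_le_mul_card_image_of_maps_to hmaps D hfib
  have hTcard : T.card = (Finset.Icc (1:ℤ) m).card * (Finset.Icc (-c) c).card ^ D := by
    rw [hTdef, Fintype.card_piFinset, Fin.prod_univ_castSucc]
    have h1 : ∀ i : Fin D,
        (if ((i.castSucc : Fin (D+1)):ℕ) = D then Finset.Icc (1:ℤ) m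
          else Finset.Icc (-c) c).card = (Finset.Icc (-c) c).card := by
      intro i
      rw [if_neg]
      have := i.isLt
      simp only [Fin.coe_castSucc]
      omega
    rw [Finset.prod_congr rfl (fun i _ => h1 i), Finset.prod_const, Finset.card_univ,
      Fintype.card_fin]
    have h2 : (if ((Fin.last D : Fin (D+1)) : ℕ) = D then Finset.Icc (1:ℤ) m
        else Finset.Icc (-c) c) = Finset.Icc (1:ℤ) m := by
      rw [if_pos (by simp)]
    rw [h2]
    ring
  -- real estimates
  have hIcc1 : ((Finset.Icc (1:ℤ) m).card : ℝ) ≤ Mr := by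
    rw [Int.card_Icc]
    have h0 : ((1:ℤ) ≤ m + 1) := by omega
    have : ((m + 1 - 1).toNat : ℤ) = m := by omega
    have hcast : (((m + 1 - 1).toNat : ℕ) : ℝ) = (m : ℝ) := by exact_mod_cast congrArg (Int.cast : ℤ → ℝ) this
    rw [hcast]
    exact Int.floor_le Mr
  have hIcc2 : ((Finset.Icc (-c) c).card : ℝ) ≤ 3 * (2^D * Mr) := by
    rw [Int.card_Icc]
    have : ((c + 1 - -c).toNat : ℤ) = 2*c + 1 := by omega
    have hcast : (((c + 1 - -c).toNat : ℕ) : ℝ) = 2*(c:ℝ) + 1 := by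
      exact_mod_cast congrArg (Int.cast : ℤ → ℝ) this
    rw [hcast]
    have hfl : (c:ℝ) ≤ 2^D * Mr := Int.floor_le _
    linarith
  have hcardR : ((setE D N).ncard : ℝ) ≤ (D:ℝ) * (Mr * (3 * (2^D * Mr))^D) := by
    rw [Set.ncard_eq_toFinset_card _ hfin]
    have h1 : ((hfin.toFinset.card : ℕ) : ℝ) ≤ (D:ℝ) * (((Finset.Icc (1:ℤ) m).card) *
        ((Finset.Icc (-c) c).card) ^ D : ℕ) := by
      exact_mod_cast le_trans hcount (le_of_eq (by rw [hTcard]))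
    refine le_trans h1 ?_
    push_cast
    have hc2 : (0:ℝ) ≤ ((Finset.Icc (-c) c).card : ℝ) := Nat.cast_nonneg _
    have hpow : (((Finset.Icc (-c) c).card : ℝ)) ^ D ≤ (3 * (2^D * Mr))^D :=
      pow_le_pow_left₀ hc2 hIcc2 D
    have hD0 : (0:ℝ) ≤ (D:ℝ) := Nat.cast_nonneg _
    have h3 : (0:ℝ) ≤ (3 * (2^D * Mr))^D := by positivity
    have hIc1 : (0:ℝ) ≤ ((Finset.Icc (1:ℤ) m).card : ℝ) := Nat.cast_nonneg _
    calc (D:ℝ) * (((Finset.Icc (1:ℤ) m).card : ℝ) * ((Finset.Icc (-c) c).card : ℝ) ^ D)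
        ≤ (D:ℝ) * (((Finset.Icc (1:ℤ) m).card : ℝ) * (3 * (2^D * Mr))^D) := by
          refine mul_le_mul_of_nonneg_left (mul_le_mul_of_nonneg_left hpow hIc1) hD0
      _ ≤ (D:ℝ) * (Mr * (3 * (2^D * Mr))^D) := by
          refine mul_le_mul_of_nonneg_left (mul_le_mul_of_nonneg_right hIcc1 h3) hD0
  refine le_trans hcardR ?_
  have hexpand : (D:ℝ) * (Mr * (3 * (2^D * Mr))^D)
      = ((D:ℝ) * 3^D * 2^(D*D)) * Mr^(D+1) := by
    rw [mul_pow, mul_pow, ← pow_mul, pow_succ]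
    ring
  rw [hexpand]
  have hkey := keyNum D hD
  have hMrpow : Mr^(D+1) = Real.exp ((D:ℝ) * N * (D+1)) := by
    rw [hMrdef, ← Real.exp_nat_mul]
    congr 1
    push_cast
    ring
  rw [hMrpow]
  have h0 : (0:ℝ) ≤ Real.exp ((D:ℝ) * N * (D+1)) := (Real.exp_pos _).le
  calc ((D:ℝ) * 3^D * 2^(D*D)) * Real.exp ((D:ℝ) * N * (D+1))
      ≤ Real.exp ((D:ℝ) * ((D:ℝ)+1)) * Real.exp ((D:ℝ) * N * (D+1)) :=
        mul_le_mul_of_nonneg_right hkey h0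
    _ = Real.exp ((D:ℝ) * ((D:ℝ)+1) + (D:ℝ) * N * (D+1)) := (Real.exp_add _ _).symm
    _ = Real.exp (D * (D + 1) * (N + 1)) := by
        congr 1
        push_cast
        ring
end

section
/- There exists an entire function f, transcendental over ℂ[z], such that f(α) ∈ ℚ[α] for every algebraic number α. -/
open Polynomial Filter Set Metric



private lemma StaeckelAux.liouville_quotient (r h : Polynomial ℂ) (hdeg : r.degree < h.degree)
    (g : ℂ → ℂ) (hg : Differentiable ℂ g)
    (heq : ∀ z : ℂ, r.eval z = h.eval z * g z) : r = 0 := by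
  by_cases hr : r = 0
  · exact hr
  have hh : h ≠ 0 := by
    rintro rfl
    rw [degree_zero] at hdeg
    exact not_lt_bot hdeg
  set n := h.natDegree with hn
  set k := r.natDegree with hk
  have hkn : k < n := natDegree_lt_natDegree hr hdeg
  have hlead : ‖h.leadingCoeff‖ ≠ 0 := norm_ne_zero_iff.2 (leadingCoeff_ne_zero.2 hh)
  set Rup : Polynomial ℝ := ∑ j ∈ Finset.range (k + 1), C ‖r.coeff j‖ * X ^ j with hRup_def
  set Hlow : Polynomial ℝ :=
    C ‖h.leadingCoeff‖ * X ^ n - ∑ j ∈ Finset.range n, C ‖h.coeff j‖ * X ^ j with hHlow_def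
  have hRup_eval : ∀ x : ℝ, Rup.eval x = ∑ j ∈ Finset.range (k + 1), ‖r.coeff j‖ * x ^ j := by
    intro x; simp [hRup_def, eval_finset_sum]
  have hHlow_eval : ∀ x : ℝ,
      Hlow.eval x = ‖h.leadingCoeff‖ * x ^ n - ∑ j ∈ Finset.range n, ‖h.coeff j‖ * x ^ j := by
    intro x; simp [hHlow_def, eval_finset_sum]
  have hRup_bound : ∀ z : ℂ, ‖r.eval z‖ ≤ Rup.eval ‖z‖ := by
    intro z
    rw [eval_eq_sum_range' (Nat.lt_succ_self k) z, hRup_eval]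
    refine (norm_sum_le _ _).trans (le_of_eq ?_)
    refine Finset.sum_congr rfl fun j _ => ?_
    simp [norm_mul, norm_pow]
  have hHlow_bound : ∀ z : ℂ, Hlow.eval ‖z‖ ≤ ‖h.eval z‖ := by
    intro z
    rw [hHlow_eval, sub_le_iff_le_add]
    have hsplit : h.eval z = (∑ j ∈ Finset.range n, h.coeff j * z ^ j) + h.leadingCoeff * z ^ n := by
      rw [eval_eq_sum_range' (Nat.lt_succ_self n) z, Finset.sum_range_succ, coeff_natDegree]
    have h1 : ‖h.leadingCoeff * z ^ n‖ ≤ ‖h.eval z‖ + ‖∑ j ∈ Finset.range n, h.coeff j * z ^ j‖ := by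
      have : h.leadingCoeff * z ^ n = h.eval z - ∑ j ∈ Finset.range n, h.coeff j * z ^ j := by
        rw [hsplit]; ring
      rw [this]
      exact norm_sub_le _ _
    have h2 : ‖∑ j ∈ Finset.range n, h.coeff j * z ^ j‖ ≤ ∑ j ∈ Finset.range n, ‖h.coeff j‖ * ‖z‖ ^ j := by
      refine (norm_sum_le _ _).trans (le_of_eq ?_)
      refine Finset.sum_congr rfl fun j _ => ?_
      simp [norm_mul, norm_pow]
    calc ‖h.leadingCoeff‖ * ‖z‖ ^ n = ‖h.leadingCoeff * z ^ n‖ := by simp [norm_mul, norm_pow]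
      _ ≤ ‖h.eval z‖ + ‖∑ j ∈ Finset.range n, h.coeff j * z ^ j‖ := h1
      _ ≤ ‖h.eval z‖ + ∑ j ∈ Finset.range n, ‖h.coeff j‖ * ‖z‖ ^ j := by linarith
  have hsum_deg : (∑ j ∈ Finset.range n, (C ‖h.coeff j‖ * X ^ j : Polynomial ℝ)).degree < (n : WithBot ℕ) := by
    refine lt_of_le_of_lt (degree_sum_le _ _) ?_
    rw [Finset.sup_lt_iff (by exact_mod_cast WithBot.bot_lt_coe n)]
    intro j hj
    refine lt_of_le_of_lt (degree_C_mul_X_pow_le _ _) ?_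
    exact_mod_cast Finset.mem_range.1 hj
  have hCX_deg : (C ‖h.leadingCoeff‖ * X ^ n : Polynomial ℝ).degree = (n : WithBot ℕ) :=
    degree_C_mul_X_pow n hlead
  have hHlow_deg : Hlow.degree = (n : WithBot ℕ) := by
    rw [hHlow_def, sub_eq_add_neg, add_comm, degree_add_eq_right_of_degree_lt, hCX_deg]
    rw [hCX_deg, degree_neg]
    exact hsum_deg
  have hHlow_natDeg : Hlow.natDegree = n := natDegree_eq_of_degree_eq_some hHlow_deg
  have hHlow_lead : Hlow.leadingCoeff = ‖h.leadingCoeff‖ := by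
    rw [leadingCoeff, hHlow_natDeg, hHlow_def, coeff_sub,
      coeff_eq_zero_of_degree_lt hsum_deg, sub_zero, coeff_C_mul, coeff_X_pow]
    simp
  have hRup_deg : Rup.degree < Hlow.degree := by
    rw [hHlow_deg]
    refine lt_of_le_of_lt (degree_sum_le _ _) ?_
    rw [Finset.sup_lt_iff (by exact_mod_cast WithBot.bot_lt_coe n)]
    intro j hj
    refine lt_of_le_of_lt (degree_C_mul_X_pow_le _ _) ?_
    have := Finset.mem_range.1 hj
    exact_mod_cast by omega
  have htend0 : Tendsto (fun x : ℝ => Rup.eval x / Hlow.eval x) atTop (nhds 0) :=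
    Polynomial.div_tendsto_zero_of_degree_lt Rup Hlow hRup_deg
  have htop : Tendsto (fun x : ℝ => Hlow.eval x) atTop atTop := by
    refine Polynomial.tendsto_atTop_of_leadingCoeff_nonneg Hlow ?_ ?_
    · rw [hHlow_deg]
      exact_mod_cast Nat.pos_of_ne_zero (by omega)
    · rw [hHlow_lead]; exact norm_nonneg _
  -- find a radius beyond which ‖g‖ ≤ ratio and Hlow positive
  have hev1 : ∀ᶠ x : ℝ in atTop, 1 ≤ Hlow.eval x := htop.eventually_ge_atTop 1
  obtain ⟨x₀, hx₀⟩ := eventually_atTop.1 hev1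
  have hgbound : ∀ z : ℂ, x₀ ≤ ‖z‖ → ‖g z‖ ≤ Rup.eval ‖z‖ / Hlow.eval ‖z‖ := by
    intro z hz
    have h1 : (1 : ℝ) ≤ Hlow.eval ‖z‖ := hx₀ _ hz
    have h2 : (1 : ℝ) ≤ ‖h.eval z‖ := le_trans h1 (hHlow_bound z)
    have h3 : h.eval z ≠ 0 := by
      intro h0; rw [h0] at h2; simp at h2; linarith
    have hgz : g z = r.eval z / h.eval z := by
      field_simp
      rw [heq z]; ring
    rw [hgz, norm_div]
    refine div_le_div₀ ?_ (hRup_bound z) (by linarith) (hHlow_bound z)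
    exact le_trans (norm_nonneg _) (hRup_bound z)
  -- g tends to 0 at infinity
  have hgc : Tendsto g (Bornology.cobounded ℂ) (nhds 0) := by
    refine squeeze_zero_norm' ?_ (htend0.comp tendsto_norm_cobounded_atTop)
    filter_upwards [tendsto_norm_cobounded_atTop.eventually (eventually_ge_atTop x₀)] with z hz
    exact hgbound z hz
  -- g is bounded
  have hbd : Bornology.IsBounded (Set.range g) := by
    have hev2 : ∀ᶠ x : ℝ in atTop, Rup.eval x / Hlow.eval x < 1 :=
      htend0.eventually_lt_const one_pos
    obtain ⟨x₁, hx₁⟩ := eventually_atTop.1 hev2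
    set X₂ : ℝ := max x₀ x₁
    obtain ⟨C₁, hC₁⟩ := (isCompact_closedBall (0 : ℂ) X₂).exists_bound_of_continuousOn
      hg.continuous.continuousOn
    rw [isBounded_iff_forall_norm_le]
    refine ⟨max C₁ 1, ?_⟩
    rintro x ⟨z, rfl⟩
    by_cases hz : ‖z‖ ≤ X₂
    · exact le_trans (hC₁ z (by simpa [mem_closedBall, Complex.dist_eq] using hz)) (le_max_left _ _)
    · push_neg at hz
      have h4 := hgbound z (le_trans (le_max_left _ _) hz.le)
      have h5 := hx₁ ‖z‖ (le_trans (le_max_right _ _) hz.le)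
      exact le_trans (h4.trans h5.le) (le_max_right _ _)
  obtain ⟨c, hc⟩ := hg.exists_const_forall_eq_of_bounded hbd
  have hc0 : c = 0 := by
    have : Tendsto (fun _ : ℂ => c) (Bornology.cobounded ℂ) (nhds 0) := by
      refine hgc.congr fun z => hc z
    exact (tendsto_nhds_unique tendsto_const_nhds this)
  refine Polynomial.funext fun x => ?_
  rw [heq x, hc x, hc0]
  simp

private lemma StaeckelAux.geo_shift (N : ℕ) : Summable fun n : ℕ => (2 : ℝ)⁻¹ ^ (n + N) := by
  have h : Summable fun n : ℕ => (2 : ℝ)⁻¹ ^ n :=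
    summable_geometric_of_lt_one (by norm_num) (by norm_num)
  simpa [pow_add] using h.mul_right ((2 : ℝ)⁻¹ ^ N)

private lemma StaeckelAux.bridge (P : MvPolynomial (Fin 2) ℂ) (z w : ℂ) :
    MvPolynomial.eval ![z, w] P =
      (((MvPolynomial.aeval ![Polynomial.C Polynomial.X, Polynomial.X] P :
        Polynomial (Polynomial ℂ))).map (Polynomial.evalRingHom z)).eval w := by
  induction P using MvPolynomial.induction_on with
  | C a => simp
  | add p q hp hq => simp [hp, hq]
  | mul_X p i hp =>
    fin_cases i <;> simp [hp]

private lemma StaeckelAux.evalEval (Q : Polynomial (Polynomial ℂ)) (p : Polynomial ℂ) (z : ℂ) :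
    (Q.eval p).eval z = ((Q.map (Polynomial.evalRingHom z)).eval (p.eval z)) := by
  induction Q using Polynomial.induction_on' with
  | add q r hq hr => simp [hq, hr]
  | monomial n a => simp [eval_monomial]

private lemma StaeckelAux.summable_of_eventual_geo {F : ℕ → ℂ} (N : ℕ)
    (h : ∀ n, N ≤ n → ‖F n‖ ≤ (2 : ℝ)⁻¹ ^ n) : Summable F := by
  have h2 : Summable fun n : ℕ => F (n + N) := by
    refine Summable.of_norm ?_
    refine Summable.of_nonneg_of_le (fun n => norm_nonneg _)
      (fun n => h (n + N) (Nat.le_add_left _ _)) (StaeckelAux.geo_shift N)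
  exact (summable_nat_add_iff N).1 h2

private lemma StaeckelAux.differentiable_tsum_poly (a : ℕ → ℂ) (φ : ℕ → Polynomial ℂ)
    (hb : ∀ n : ℕ, ∀ z : ℂ, ‖z‖ ≤ (n : ℝ) → ‖a n * (φ n).eval z‖ ≤ (2 : ℝ)⁻¹ ^ n) :
    Differentiable ℂ (fun z => ∑' n, a n * (φ n).eval z) := by
  intro z0
  obtain ⟨R, hR⟩ : ∃ R : ℕ, ‖z0‖ < R := exists_nat_gt _
  set u : ℕ → ℝ := fun n => sSup ((fun z : ℂ => ‖a n * (φ n).eval z‖) '' closedBall 0 R) with hu_def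
  have hcont : ∀ n, Continuous fun z : ℂ => ‖a n * (φ n).eval z‖ := fun n =>
    (continuous_const.mul (φ n).continuous).norm
  have hmem0 : (0 : ℂ) ∈ closedBall (0 : ℂ) R := by
    simp [mem_closedBall]
  have hne : ∀ n, ((fun z : ℂ => ‖a n * (φ n).eval z‖) '' closedBall 0 R).Nonempty :=
    fun n => ⟨_, ⟨0, hmem0, rfl⟩⟩
  have hbdd : ∀ n, BddAbove ((fun z : ℂ => ‖a n * (φ n).eval z‖) '' closedBall 0 R) :=
    fun n => ((isCompact_closedBall _ _).image (hcont n)).bddAbove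
  have hu1 : ∀ n, ∀ z ∈ closedBall (0 : ℂ) R, ‖a n * (φ n).eval z‖ ≤ u n :=
    fun n z hz => le_csSup (hbdd n) ⟨z, hz, rfl⟩
  have hu2 : ∀ n, R ≤ n → u n ≤ (2 : ℝ)⁻¹ ^ n := by
    intro n hn
    refine csSup_le (hne n) ?_
    rintro y ⟨z, hz, rfl⟩
    refine hb n z ?_
    have : ‖z‖ ≤ (R : ℝ) := by simpa [mem_closedBall, Complex.dist_eq] using hz
    exact this.trans (by exact_mod_cast hn)
  have hu0 : ∀ n, 0 ≤ u n := fun n => le_trans (norm_nonneg _) (hu1 n 0 hmem0)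
  have hus : Summable u := by
    refine (summable_nat_add_iff R).1 ?_
    exact Summable.of_nonneg_of_le (fun n => hu0 _) (fun n => hu2 _ (Nat.le_add_left _ _))
      (StaeckelAux.geo_shift R)
  have hdiff : DifferentiableOn ℂ (fun z => ∑' n, a n * (φ n).eval z) (Metric.ball 0 R) :=
    Complex.differentiableOn_tsum_of_summable_norm hus
      (fun n => (((φ n).differentiable).const_mul (a n)).differentiableOn)
      Metric.isOpen_ball
      (fun n w hw => hu1 n w (Metric.ball_subset_closedBall hw))
  exact hdiff.differentiableAt (Metric.isOpen_ball.mem_nhds (by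
    simpa [Metric.mem_ball, Complex.dist_eq] using hR))

private lemma StaeckelAux.natDegree_eval_le (Q : Polynomial (Polynomial ℂ)) (p : Polynomial ℂ)
    (B : ℕ) (hB : ∀ j, (Q.coeff j).natDegree ≤ B) :
    (Q.eval p).natDegree ≤ B + Q.natDegree * p.natDegree := by
  rw [Polynomial.eval_eq_sum_range]
  refine Polynomial.natDegree_sum_le_of_forall_le _ _ fun j hj => ?_
  refine le_trans (natDegree_mul_le) ?_
  have h1 : (p ^ j).natDegree ≤ j * p.natDegree := natDegree_pow_le
  have h2 : j ≤ Q.natDegree := by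
    have := Finset.mem_range.1 hj; omega
  have h3 : j * p.natDegree ≤ Q.natDegree * p.natDegree := Nat.mul_le_mul_right _ h2
  have := hB j
  omega
theorem exists_entire_transcendental_algebraic_values :
    ∃ f : ℂ → ℂ, Differentiable ℂ f ∧
      (∀ P : MvPolynomial (Fin 2) ℂ,
        (∀ z : ℂ, MvPolynomial.eval ![z, f z] P = 0) → P = 0) ∧
      ∀ α : ℂ, IsAlgebraic ℚ α → f α ∈ Algebra.adjoin ℚ ({α} : Set ℂ) := by
  classical
  -- enumerate the algebraic numbers
  obtain ⟨e, he⟩ := (Algebraic.countable ℚ ℂ).exists_eq_range ⟨0, isAlgebraic_zero⟩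
  have halg : ∀ k : ℕ, IsAlgebraic ℚ (e k) := by
    intro k
    have : e k ∈ {x : ℂ | IsAlgebraic ℚ x} := by rw [he]; exact Set.mem_range_self k
    exact this
  choose pQ hpQ0 hpQe using halg
  set q : ℕ → Polynomial ℂ := fun k => (pQ k).map (algebraMap ℚ ℂ) with hq_def
  have hq0 : ∀ k, q k ≠ 0 := fun k => Polynomial.map_ne_zero (hpQ0 k)
  have hqe : ∀ k, (q k).eval (e k) = 0 := by
    intro k
    rw [hq_def]
    simp only [Polynomial.eval_map]
    rw [← Polynomial.aeval_def]
    exact hpQe k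
  have hqdeg : ∀ k, 1 ≤ (q k).natDegree := by
    intro k
    by_contra hcon
    push_neg at hcon
    have h0 : (q k).natDegree = 0 := by omega
    have hC := Polynomial.eq_C_of_natDegree_eq_zero h0
    have hk := hqe k
    rw [hC, Polynomial.eval_C] at hk
    exact hq0 k (by rw [hC, hk, map_zero])
  -- products
  set w : ℕ → Polynomial ℂ := fun n => ∏ k ∈ Finset.range n, q k with hw_def
  have hw0 : ∀ n, w n ≠ 0 := fun n => Finset.prod_ne_zero_iff.2 fun k _ => hq0 k
  have hwdeg : ∀ n, n ≤ (w n).natDegree := by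
    intro n
    rw [hw_def]
    rw [Polynomial.natDegree_prod _ _ fun k _ => hq0 k]
    calc n = ∑ _k ∈ Finset.range n, 1 := by simp
      _ ≤ _ := Finset.sum_le_sum fun k _ => hqdeg k
  -- exponents
  set m : ℕ → ℕ := fun n =>
    Nat.rec 1 (fun k mk => max mk ((k + 1) * (1 + mk * (w k).natDegree))) n with hm_def
  have hmsucc : ∀ n, m (n + 1) = max (m n) ((n + 1) * (1 + m n * (w n).natDegree)) := fun n => rfl
  have hmmono : Monotone m := monotone_nat_of_le_succ fun n => by rw [hmsucc]; exact le_max_left _ _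
  have hm1 : ∀ n, 1 ≤ m n := fun n => le_trans (le_refl 1) (hmmono (Nat.zero_le n))
  set h : ℕ → Polynomial ℂ := fun n => w n ^ m n with hh_def
  have hh0 : ∀ n, h n ≠ 0 := fun n => pow_ne_zero _ (hw0 n)
  set D : ℕ → ℕ := fun n => m n * (w n).natDegree with hD_def
  have hhnat : ∀ n, (h n).natDegree = D n := fun n => Polynomial.natDegree_pow _ _
  have hDgrow : ∀ n, (n + 1) * (1 + D n) ≤ D (n + 1) := by
    intro n
    calc (n + 1) * (1 + D n) ≤ m (n + 1) := by rw [hmsucc]; exact le_max_right _ _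
      _ ≤ m (n + 1) * (w (n + 1)).natDegree :=
        Nat.le_mul_of_pos_right _ (lt_of_lt_of_le (by omega) (hwdeg (n + 1)))
  have hDlt : StrictMono D := by
    refine strictMono_nat_of_lt_succ fun n => lt_of_lt_of_le ?_ (hDgrow n)
    nlinarith [Nat.zero_le (D n)]
  have hhdvd : ∀ N n, N + 1 ≤ n → h (N + 1) ∣ h n := by
    intro N n hn
    have h1 : w (N + 1) ∣ w n :=
      Finset.prod_dvd_prod_of_subset _ _ _ (Finset.range_subset_range.2 hn)
    exact dvd_trans (pow_dvd_pow_of_dvd h1 (m (N + 1))) (pow_dvd_pow _ (hmmono hn))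
  -- bounds
  have hA : ∀ n : ℕ, ∃ A : ℝ, 0 ≤ A ∧ (∀ z ∈ closedBall (0 : ℂ) n, ‖(h n).eval z‖ ≤ A) ∧
      (∀ N, N < n → ∀ z ∈ closedBall (0 : ℂ) n, ‖(h n / h (N + 1)).eval z‖ ≤ A) := by
    intro n
    obtain ⟨C0, hC0⟩ := (isCompact_closedBall (0 : ℂ) n).exists_bound_of_continuousOn
      (h n).continuous.continuousOn
    have hCB : ∀ N : ℕ, ∃ C : ℝ, ∀ z ∈ closedBall (0 : ℂ) n, ‖(h n / h (N + 1)).eval z‖ ≤ C :=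
      fun N => (isCompact_closedBall (0 : ℂ) n).exists_bound_of_continuousOn
        (Polynomial.continuous _).continuousOn
    choose CB hCBs using hCB
    refine ⟨max C0 0 + ∑ N ∈ Finset.range n, max (CB N) 0, by positivity, ?_, ?_⟩
    · intro z hz
      have h1 : ‖(h n).eval z‖ ≤ max C0 0 := le_trans (hC0 z hz) (le_max_left _ _)
      have hs : 0 ≤ ∑ N ∈ Finset.range n, max (CB N) 0 :=
        Finset.sum_nonneg fun i _ => le_max_right _ _
      linarith
    · intro N hN z hz
      have h1 : ‖(h n / h (N + 1)).eval z‖ ≤ max (CB N) 0 :=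
        le_trans (hCBs N z hz) (le_max_left _ _)
      have h2 : max (CB N) 0 ≤ ∑ N ∈ Finset.range n, max (CB N) 0 :=
        Finset.single_le_sum (f := fun i => max (CB i) 0) (fun i _ => le_max_right _ _) (Finset.mem_range.2 hN)
      have h3 : (0 : ℝ) ≤ max C0 0 := le_max_right _ _
      linarith
  choose A hA0 hA1 hA2 using hA
  -- rational coefficients
  have hcex : ∀ n : ℕ, ∃ cq : ℚ, 0 < cq ∧ (cq : ℝ) * (1 + A n) ≤ (2 : ℝ)⁻¹ ^ n := by
    intro n
    have hden : (0 : ℝ) < 1 + A n := by have := hA0 n; linarith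
    have hpos : (0 : ℝ) < (2 : ℝ)⁻¹ ^ n / (1 + A n) := by positivity
    obtain ⟨cq, hcq1, hcq2⟩ := exists_rat_btwn hpos
    refine ⟨cq, by exact_mod_cast hcq1, ?_⟩
    rw [div_eq_mul_inv] at hcq2
    calc (cq : ℝ) * (1 + A n) ≤ ((2 : ℝ)⁻¹ ^ n * (1 + A n)⁻¹) * (1 + A n) := by nlinarith
      _ = (2 : ℝ)⁻¹ ^ n := by field_simp
  choose c hc0 hcb using hcex
  have hcC0 : ∀ n, ((c n : ℚ) : ℂ) ≠ 0 := fun n => by exact_mod_cast (hc0 n).ne'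
  have hnormc : ∀ n : ℕ, ‖((c n : ℚ) : ℂ)‖ = ((c n : ℚ) : ℝ) := by
    intro n
    rw [Complex.norm_ratCast]
    exact abs_of_pos (by exact_mod_cast hc0 n)
  -- the entire function
  have hbf : ∀ n : ℕ, ∀ z : ℂ, ‖z‖ ≤ (n : ℝ) → ‖((c n : ℚ) : ℂ) * (h n).eval z‖ ≤ (2 : ℝ)⁻¹ ^ n := by
    intro n z hz
    rw [norm_mul, hnormc]
    have h1 : ‖(h n).eval z‖ ≤ A n := hA1 n z (by
      simp only [mem_closedBall, Complex.dist_eq, sub_zero]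
      exact hz)
    have h2 := hcb n
    have h3 : (0 : ℝ) < (c n : ℝ) := by exact_mod_cast hc0 n
    nlinarith [hA0 n, norm_nonneg ((h n).eval z)]
  set f : ℂ → ℂ := fun z => ∑' n, ((c n : ℚ) : ℂ) * (h n).eval z with hf_def
  have hfd : Differentiable ℂ f := StaeckelAux.differentiable_tsum_poly _ _ hbf
  have hfs : ∀ z : ℂ, Summable fun n => ((c n : ℚ) : ℂ) * (h n).eval z := by
    intro z
    refine StaeckelAux.summable_of_eventual_geo ⌈‖z‖⌉₊ fun n hn => hbf n z ?_
    exact le_trans (Nat.le_ceil _) (by exact_mod_cast hn)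
  -- tails
  set t : ℕ → ℕ → Polynomial ℂ := fun N n => h n / h (N + 1) with ht_def
  have hts : ∀ N n, N + 1 ≤ n → h (N + 1) * t N n = h n := fun N n hn =>
    EuclideanDomain.mul_div_cancel' (hh0 _) (hhdvd N n hn)
  have hbg : ∀ N : ℕ, ∀ n : ℕ, ∀ z : ℂ, ‖z‖ ≤ (n : ℝ) →
      ‖((c (n + (N + 1)) : ℚ) : ℂ) * (t N (n + (N + 1))).eval z‖ ≤ (2 : ℝ)⁻¹ ^ n := by
    intro N n z hz
    rw [norm_mul, hnormc]
    have hball : z ∈ closedBall (0 : ℂ) (n + (N + 1) : ℕ) := by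
      simp only [mem_closedBall, Complex.dist_eq, sub_zero]
      refine le_trans hz ?_
      exact_mod_cast Nat.le_add_right n (N + 1)
    have h1 : ‖(t N (n + (N + 1))).eval z‖ ≤ A (n + (N + 1)) :=
      hA2 (n + (N + 1)) N (by omega) z hball
    have h2 := hcb (n + (N + 1))
    have h3 : (0 : ℝ) < (c (n + (N + 1)) : ℝ) := by exact_mod_cast hc0 _
    have h4 : (2 : ℝ)⁻¹ ^ (n + (N + 1)) ≤ (2 : ℝ)⁻¹ ^ n :=
      pow_le_pow_of_le_one (by norm_num) (by norm_num) (Nat.le_add_right _ _)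
    nlinarith [hA0 (n + (N + 1)), norm_nonneg ((t N (n + (N + 1))).eval z)]
  set g : ℕ → ℂ → ℂ := fun N z => ∑' n, ((c (n + (N + 1)) : ℚ) : ℂ) * (t N (n + (N + 1))).eval z
    with hg_def
  have hgd : ∀ N, Differentiable ℂ (g N) := fun N =>
    StaeckelAux.differentiable_tsum_poly _ _ (hbg N)
  -- partial sums
  set p : ℕ → Polynomial ℂ := fun N =>
    ∑ n ∈ Finset.range (N + 1), Polynomial.C ((c n : ℚ) : ℂ) * h n with hp_def
  have hkey : ∀ N z, f z = (p N).eval z + (h (N + 1)).eval z * g N z := by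
    intro N z
    have hsum := (hfs z).sum_add_tsum_nat_add (N + 1)
    rw [hf_def]
    simp only
    rw [← hsum]
    congr 1
    · rw [hp_def]
      simp only
      rw [Polynomial.eval_finset_sum]
      refine Finset.sum_congr rfl fun n _ => ?_
      rw [Polynomial.eval_mul, Polynomial.eval_C]
    · have hterm : ∀ i : ℕ, ((c (i + (N + 1)) : ℚ) : ℂ) * (h (i + (N + 1))).eval z
          = (h (N + 1)).eval z * (((c (i + (N + 1)) : ℚ) : ℂ) * (t N (i + (N + 1))).eval z) := by
        intro i
        rw [← hts N (i + (N + 1)) (by omega), Polynomial.eval_mul]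
        ring
      rw [tsum_congr hterm, tsum_mul_left]
  -- degrees of partial sums
  have hpdeg : ∀ N, (p N).degree = (D N : WithBot ℕ) := by
    intro N
    rw [hp_def]
    simp only
    rw [Finset.sum_range_succ]
    have hlast : (Polynomial.C ((c N : ℚ) : ℂ) * h N).degree = (D N : WithBot ℕ) := by
      rw [Polynomial.degree_C_mul (hcC0 N), Polynomial.degree_eq_natDegree (hh0 N), hhnat]
    have hrest : (∑ n ∈ Finset.range N, Polynomial.C ((c n : ℚ) : ℂ) * h n).degree
        < (Polynomial.C ((c N : ℚ) : ℂ) * h N).degree := by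
      rw [hlast]
      refine lt_of_le_of_lt (Polynomial.degree_sum_le _ _) ?_
      rw [Finset.sup_lt_iff (WithBot.bot_lt_coe _)]
      intro j hj
      rw [Polynomial.degree_C_mul (hcC0 j), Polynomial.degree_eq_natDegree (hh0 j), hhnat]
      exact_mod_cast hDlt (Finset.mem_range.1 hj)
    rw [Polynomial.degree_add_eq_right_of_degree_lt hrest, hlast]
  have hpnat : ∀ N, (p N).natDegree = D N := fun N =>
    Polynomial.natDegree_eq_of_degree_eq_some (hpdeg N)
  refine ⟨f, hfd, ?_, ?_⟩
  · -- transcendence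
    intro P hP
    set Q : Polynomial (Polynomial ℂ) :=
      MvPolynomial.aeval ![Polynomial.C Polynomial.X, Polynomial.X] P with hQ_def
    have hbr : ∀ z v : ℂ,
        MvPolynomial.eval ![z, v] P = ((Q.map (Polynomial.evalRingHom z)).eval v) := by
      intro z v; rw [hQ_def]; exact StaeckelAux.bridge P z v
    have hfz : ∀ z : ℂ, (Q.map (Polynomial.evalRingHom z)).eval (f z) = 0 :=
      fun z => (hbr z (f z)).symm.trans (hP z)
    have hQ0 : Q = 0 := by
      by_contra hQ0
      set d := Q.natDegree with hd_def
      set B := (Finset.range (d + 1)).sup (fun j => (Q.coeff j).natDegree) with hB_def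
      have hB : ∀ j, (Q.coeff j).natDegree ≤ B := by
        intro j
        rcases le_or_gt j d with hj | hj
        · exact Finset.le_sup (f := fun j => (Q.coeff j).natDegree) (Finset.mem_range.2 (by omega))
        · rw [Polynomial.coeff_eq_zero_of_natDegree_lt hj]; simp
      set N₀ := max B d with hN0_def
      have hsub : ∀ z b a : ℂ,
          ((Q.map (Polynomial.evalRingHom z)).eval b) - ((Q.map (Polynomial.evalRingHom z)).eval a)
          = (b - a) * ∑ j ∈ Finset.range (d + 1), (Q.coeff j).eval z *
            ∑ i ∈ Finset.range j, b ^ i * a ^ (j - 1 - i) := by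
        intro z b a
        have hQD : (Q.map (Polynomial.evalRingHom z)).natDegree < d + 1 :=
          Nat.lt_succ_of_le Polynomial.natDegree_map_le
        rw [Polynomial.eval_eq_sum_range' hQD, Polynomial.eval_eq_sum_range' hQD,
          ← Finset.sum_sub_distrib, Finset.mul_sum]
        refine Finset.sum_congr rfl fun j hj => ?_
        rw [Polynomial.coeff_map]
        have hgeom := geom_sum₂_mul b a j
        calc (Polynomial.evalRingHom z) (Q.coeff j) * b ^ j
              - (Polynomial.evalRingHom z) (Q.coeff j) * a ^ j
            = (Polynomial.evalRingHom z) (Q.coeff j) * (b ^ j - a ^ j) := by ring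
          _ = (Polynomial.evalRingHom z) (Q.coeff j) *
              ((∑ i ∈ Finset.range j, b ^ i * a ^ (j - 1 - i)) * (b - a)) := by rw [hgeom]
          _ = (b - a) * ((Q.coeff j).eval z * ∑ i ∈ Finset.range j, b ^ i * a ^ (j - 1 - i)) := by
              simp only [Polynomial.coe_evalRingHom]; ring
      have hroot : ∀ N, N₀ ≤ N → Q.eval (p N) = 0 := by
        intro N hN
        set S : ℂ → ℂ := fun z => ∑ j ∈ Finset.range (d + 1), (Q.coeff j).eval z *
          ∑ i ∈ Finset.range j, ((p N).eval z) ^ i * (f z) ^ (j - 1 - i) with hS_def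
        have hSdiff : Differentiable ℂ S := by
          rw [hS_def]
          refine Differentiable.fun_sum fun j _ => Differentiable.mul ?_ ?_
          · exact (Polynomial.differentiable _)
          · exact Differentiable.fun_sum fun i _ =>
              (((p N).differentiable).pow i).mul (hfd.pow (j - 1 - i))
        have hident : ∀ z : ℂ, (Q.eval (p N)).eval z = (h (N + 1)).eval z * (-(g N z * S z)) := by
          intro z
          have e1 := StaeckelAux.evalEval Q (p N) z
          have e2 := hsub z ((p N).eval z) (f z)
          rw [hfz z, sub_zero] at e2
          have e3 : (p N).eval z - f z = -((h (N + 1)).eval z * g N z) := by rw [hkey N z]; ring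
          rw [e1, e2, e3, hS_def]
          ring
        have hdiffG : Differentiable ℂ fun z => -(g N z * S z) := ((hgd N).mul hSdiff).neg
        by_cases hRN : Q.eval (p N) = 0
        · exact hRN
        · have hdeglt : (Q.eval (p N)).degree < (h (N + 1)).degree := by
            rw [Polynomial.degree_eq_natDegree hRN, Polynomial.degree_eq_natDegree (hh0 (N + 1)),
              hhnat]
            have b1 : (Q.eval (p N)).natDegree ≤ B + d * D N := by
              have hb1 := StaeckelAux.natDegree_eval_le Q (p N) B hB
              rwa [hpnat N, ← hd_def] at hb1
            have hBN : B ≤ N := le_trans (le_max_left _ _) hN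
            have hdN : d ≤ N := le_trans (le_max_right _ _) hN
            have hg2 := hDgrow N
            have b2 : B + d * D N < D (N + 1) := by nlinarith
            exact_mod_cast lt_of_le_of_lt b1 b2
          exact StaeckelAux.liouville_quotient _ _ hdeglt _ hdiffG hident
      have hinj : Function.Injective fun N : ℕ => p (N + N₀) := by
        intro a b hab
        simp only at hab
        have hDab : ((D (a + N₀) : WithBot ℕ)) = (D (b + N₀) : WithBot ℕ) := by
          rw [← hpdeg, ← hpdeg, hab]
        have : D (a + N₀) = D (b + N₀) := by exact_mod_cast hDab
        have := hDlt.injective this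
        omega
      have hmem : ∀ N : ℕ, p (N + N₀) ∈ {x : Polynomial ℂ | Q.IsRoot x} :=
        fun N => hroot (N + N₀) (Nat.le_add_left _ _)
      exact Set.infinite_of_injective_forall_mem hinj hmem (Polynomial.finite_setOf_isRoot hQ0)
    refine MvPolynomial.funext fun x => ?_
    have hx : ![x 0, x 1] = x := by
      funext i; fin_cases i <;> simp
    calc MvPolynomial.eval x P = MvPolynomial.eval ![x 0, x 1] P := by rw [hx]
      _ = ((Q.map (Polynomial.evalRingHom (x 0))).eval (x 1)) := hbr (x 0) (x 1)
      _ = 0 := by rw [hQ0]; simp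
      _ = MvPolynomial.eval x 0 := by simp
  · -- algebraic values
    intro α hα
    have : α ∈ Set.range e := by rw [← he]; exact hα
    obtain ⟨idx, rfl⟩ := this
    have hzero : ∀ n, n ∉ Finset.range (idx + 1) →
        ((c n : ℚ) : ℂ) * (h n).eval (e idx) = 0 := by
      intro n hn
      have hidx : idx < n := by
        simp only [Finset.mem_range] at hn; omega
      have hwz : (w n).eval (e idx) = 0 := by
        rw [hw_def]
        simp only
        rw [Polynomial.eval_prod]
        exact Finset.prod_eq_zero (Finset.mem_range.2 hidx) (hqe idx)
      have : (h n).eval (e idx) = 0 := by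
        rw [hh_def]
        simp only
        rw [Polynomial.eval_pow, hwz, zero_pow (by have := hm1 n; omega)]
      rw [this, mul_zero]
    rw [hf_def]
    simp only
    rw [tsum_eq_sum hzero]
    refine Subalgebra.sum_mem _ fun n _ => ?_
    have h1 : ((c n : ℚ) : ℂ) ∈ Algebra.adjoin ℚ ({e idx} : Set ℂ) := by
      have : ((c n : ℚ) : ℂ) = algebraMap ℚ ℂ (c n) := rfl
      rw [this]
      exact Subalgebra.algebraMap_mem _ _
    refine Subalgebra.mul_mem _ h1 ?_
    have h2 : (h n).eval (e idx) = ((w n).eval (e idx)) ^ m n := by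
      rw [hh_def]; simp only; rw [Polynomial.eval_pow]
    rw [h2]
    refine Subalgebra.pow_mem _ ?_ _
    have h3 : (w n).eval (e idx) = ∏ k ∈ Finset.range n, (q k).eval (e idx) := by
      rw [hw_def]; simp only; rw [Polynomial.eval_prod]
    rw [h3]
    refine Subalgebra.prod_mem _ fun k _ => ?_
    have h4 : (q k).eval (e idx) = Polynomial.aeval (e idx) (pQ k) := by
      rw [hq_def]
      simp only
      rw [Polynomial.eval_map, ← Polynomial.aeval_def]
    rw [h4]
    exact Polynomial.aeval_mem_adjoin_singleton _ _
end

section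
/- An entire function that is not a polynomial is transcendental over ℂ[z]: if f is entire and there is a nonzero polynomial P ∈ ℂ[X,Y] with P(z, f(z)) = 0 for all z ∈ ℂ, then f is a polynomial (in fact f is algebraic of a very restricted type; for entire f this forces f polynomial). -/
open Polynomial

theorem lower_bound_at_infty (a : Polynomial ℂ) (ha : a ≠ 0) :
    ∃ c > (0:ℝ), ∃ R : ℝ, ∀ z : ℂ, R ≤ ‖z‖ → c ≤ ‖a.eval z‖ := by
  rcases lt_or_ge 0 a.degree with hd | hd
  · have h := a.tendsto_norm_atTop hd (tendsto_norm_cobounded_atTop (E := ℂ))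
    have h2 := h.eventually_ge_atTop 1
    rw [← @comap_norm_atTop ℂ, Filter.eventually_comap] at h2
    obtain ⟨R, hR⟩ := Filter.eventually_atTop.mp h2
    exact ⟨1, one_pos, R, fun z hz => hR ‖z‖ hz z rfl⟩
  · have h0 : a.natDegree = 0 := natDegree_eq_zero_iff_degree_le_zero.mpr hd
    obtain ⟨c, rfl⟩ := natDegree_eq_zero.mp h0
    have hc : c ≠ 0 := fun h => ha (by simp [h])
    exact ⟨‖c‖, by simpa using hc, 0, fun z _ => by simp⟩

theorem eval_compat (P : MvPolynomial (Fin 2) ℂ) (z w : ℂ) :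
    Polynomial.eval w (Polynomial.map (Polynomial.evalRingHom z)
      (MvPolynomial.aeval ![(Polynomial.C Polynomial.X : Polynomial (Polynomial ℂ)),
        Polynomial.X] P)) = MvPolynomial.eval ![z, w] P := by
  induction P using MvPolynomial.induction_on with
  | C a => simp
  | add p q hp hq => simp [hp, hq]
  | mul_X p i hp => fin_cases i <;> simp [hp]

theorem norm_eval_le (p : Polynomial ℂ) (z : ℂ) (hz : 1 ≤ ‖z‖) (m : ℕ) (hm : p.natDegree ≤ m) :
    ‖p.eval z‖ ≤ (∑ i ∈ Finset.range (p.natDegree + 1), ‖p.coeff i‖) * ‖z‖ ^ m := by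
  rw [eval_eq_sum_range, Finset.sum_mul]
  refine (norm_sum_le _ _).trans (Finset.sum_le_sum fun i hi => ?_)
  rw [norm_mul, norm_pow]
  exact mul_le_mul_of_nonneg_left
    (pow_le_pow_right₀ hz ((Nat.lt_succ_iff.mp (Finset.mem_range.mp hi)).trans hm))
    (norm_nonneg _)

open Polynomial

theorem poly_of_growth (d : ℕ) : ∀ (f : ℂ → ℂ), Differentiable ℂ f →
    ∀ C R : ℝ, (∀ z : ℂ, R ≤ ‖z‖ → ‖f z‖ ≤ C * ‖z‖ ^ d) →
    ∃ p : Polynomial ℂ, ∀ z, f z = p.eval z := by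
  induction d with
  | zero =>
    intro f hf C R hb
    obtain ⟨M, hM⟩ := (isCompact_closedBall (0:ℂ) |R|).exists_bound_of_continuousOn
      hf.continuous.continuousOn
    have hbdd : Bornology.IsBounded (Set.range f) := by
      rw [isBounded_iff_forall_norm_le]
      refine ⟨max M (C * 1), ?_⟩
      rintro x ⟨z, rfl⟩
      rcases le_or_gt ‖z‖ |R| with h | h
      · exact le_max_of_le_left (hM z (by simpa [Metric.mem_closedBall] using h))
      · exact le_max_of_le_right (by simpa using hb z ((le_abs_self R).trans h.le))
    obtain ⟨c, hc⟩ := hf.exists_eq_const_of_bounded hbdd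
    exact ⟨Polynomial.C c, fun z => by rw [congrFun hc z]; simp⟩
  | succ d ih =>
    intro f hf C R hb
    set g : ℂ → ℂ := dslope f 0 with hgdef
    have hg : Differentiable ℂ g := by
      rw [← differentiableOn_univ] at hf ⊢
      exact (Complex.differentiableOn_dslope (Filter.univ_mem)).mpr hf
    have hgb : ∀ z : ℂ, max R 1 ≤ ‖z‖ → ‖g z‖ ≤ (max C 0 + ‖f 0‖) * ‖z‖ ^ d := by
      intro z hz
      have hz1 : (1:ℝ) ≤ ‖z‖ := le_trans (le_max_right _ _) hz
      have hzne : z ≠ 0 := by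
        intro h; rw [h] at hz1; simp at hz1; linarith
      have hgz : g z * z = f z - f 0 := by
        rw [hgdef, dslope_of_ne _ hzne]
        rw [slope_def_field, sub_zero, div_mul_cancel₀ _ hzne]
      have hnorm : ‖g z‖ * ‖z‖ = ‖f z - f 0‖ := by rw [← norm_mul, hgz]
      have h1 : ‖f z - f 0‖ ≤ (max C 0 + ‖f 0‖) * ‖z‖ ^ d * ‖z‖ := by
        have hb2 := hb z (le_trans (le_max_left _ _) hz)
        have e1 : C * ‖z‖ ^ (d+1) ≤ max C 0 * ‖z‖ ^ (d+1) :=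
          mul_le_mul_of_nonneg_right (le_max_left _ _) (by positivity)
        have e2 : ‖f 0‖ ≤ ‖f 0‖ * ‖z‖ ^ (d+1) :=
          le_mul_of_one_le_right (norm_nonneg _) (one_le_pow₀ hz1)
        have epow2 : ‖z‖ ^ (d+1) = ‖z‖ ^ d * ‖z‖ := pow_succ _ _
        rw [pow_succ] at hb2 e1 e2
        nlinarith [norm_sub_le (f z) (f 0)]
      rw [← hnorm] at h1
      exact le_of_mul_le_mul_right h1 (by positivity)
    obtain ⟨p, hp⟩ := ih g hg (max C 0 + ‖f 0‖) (max R 1) hgb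
    refine ⟨Polynomial.C (f 0) + Polynomial.X * p, fun z => ?_⟩
    rcases eq_or_ne z 0 with rfl | hz
    · simp
    · have hgz : g z * z = f z - f 0 := by
        rw [hgdef, dslope_of_ne _ hz]
        rw [slope_def_field, sub_zero, div_mul_cancel₀ _ hz]
      have : f z = f 0 + z * g z := by linear_combination -hgz
      rw [this, hp z]
      simp


theorem entire_algebraic_is_polynomial (f : ℂ → ℂ) (hf : Differentiable ℂ f)
    (P : MvPolynomial (Fin 2) ℂ) (hP : P ≠ 0)
    (hvan : ∀ z : ℂ, MvPolynomial.eval ![z, f z] P = 0) :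
    ∃ p : Polynomial ℂ, ∀ z : ℂ, f z = p.eval z := by
  set Q : Polynomial (Polynomial ℂ) :=
    MvPolynomial.aeval ![(Polynomial.C Polynomial.X : Polynomial (Polynomial ℂ)),
      Polynomial.X] P with hQdef
  have hQ : Q ≠ 0 := by
    intro h
    apply hP
    apply MvPolynomial.funext
    intro x
    have hx : x = ![x 0, x 1] := by funext i; fin_cases i <;> rfl
    rw [hx, ← eval_compat P (x 0) (x 1), ← hQdef, h]
    simp
  have hvan' : ∀ z, ((Q.map (Polynomial.evalRingHom z)).eval (f z)) = 0 := by
    intro z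
    rw [hQdef, eval_compat]
    exact hvan z
  rcases Nat.eq_zero_or_pos Q.natDegree with hn | hn
  · exfalso
    obtain ⟨a0, ha0⟩ := natDegree_eq_zero.mp hn
    have h0 : a0 = 0 := by
      apply Polynomial.funext
      intro z
      have := hvan' z
      rw [← ha0] at this
      simpa using this
    exact hQ (by rw [← ha0, h0]; simp)
  · set n := Q.natDegree with hndef
    have han : Q.coeff n ≠ 0 := fun h => hQ (leadingCoeff_eq_zero.mp h)
    obtain ⟨c, hc, R₀, hR₀⟩ := lower_bound_at_infty (Q.coeff n) han
    set m := Finset.sup (Finset.range n) (fun i => (Q.coeff i).natDegree) with hmdef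
    set S := ∑ i ∈ Finset.range n,
      (∑ j ∈ Finset.range ((Q.coeff i).natDegree + 1), ‖(Q.coeff i).coeff j‖) with hSdef
    have hS : 0 ≤ S := Finset.sum_nonneg fun i _ => Finset.sum_nonneg fun j _ => norm_nonneg _
    apply poly_of_growth m f hf (1 + S / c) (max R₀ 1)
    intro z hz
    have hz1 : (1:ℝ) ≤ ‖z‖ := le_trans (le_max_right _ _) hz
    have hzm : (1:ℝ) ≤ ‖z‖ ^ m := one_le_pow₀ hz1
    have hzm0 : (0:ℝ) < ‖z‖ ^ m := lt_of_lt_of_le one_pos hzm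
    have hCb : (1:ℝ) ≤ 1 + S / c := by
      have : 0 ≤ S / c := div_nonneg hS hc.le
      linarith
    have hT : ∑ i ∈ Finset.range n, ‖(Q.coeff i).eval z‖ ≤ S * ‖z‖ ^ m := by
      rw [hSdef, Finset.sum_mul]
      refine Finset.sum_le_sum fun i hi => ?_
      exact norm_eval_le _ z hz1 m (Finset.le_sup (f := fun i => (Q.coeff i).natDegree) hi)
    rcases le_or_gt ‖f z‖ 1 with hf1 | hf1
    · calc ‖f z‖ ≤ 1 * ‖z‖ ^ m := by nlinarith
        _ ≤ (1 + S / c) * ‖z‖ ^ m := by nlinarith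
    · -- root bound
      have heval := hvan' z
      set Qz := Q.map (Polynomial.evalRingHom z) with hQzdef
      have hQzdeg : Qz.natDegree < n + 1 :=
        Nat.lt_succ_of_le natDegree_map_le
      rw [eval_eq_sum_range' hQzdeg, Finset.sum_range_succ] at heval
      have hc2 : ∀ i, Qz.coeff i = (Q.coeff i).eval z := fun i => coeff_map _ _
      have key : ‖(Q.coeff n).eval z‖ * ‖f z‖ ^ n ≤
          (∑ i ∈ Finset.range n, ‖(Q.coeff i).eval z‖) * ‖f z‖ ^ (n - 1) := by
        have h1 : (Q.coeff n).eval z * (f z) ^ n =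
            -∑ i ∈ Finset.range n, Qz.coeff i * (f z) ^ i := by
          rw [← hc2 n]
          linear_combination heval
        calc ‖(Q.coeff n).eval z‖ * ‖f z‖ ^ n
            = ‖(Q.coeff n).eval z * (f z) ^ n‖ := by rw [norm_mul, norm_pow]
          _ = ‖∑ i ∈ Finset.range n, Qz.coeff i * (f z) ^ i‖ := by rw [h1, norm_neg]
          _ ≤ ∑ i ∈ Finset.range n, ‖Qz.coeff i * (f z) ^ i‖ := norm_sum_le _ _
          _ ≤ ∑ i ∈ Finset.range n, ‖(Q.coeff i).eval z‖ * ‖f z‖ ^ (n-1) := by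
              refine Finset.sum_le_sum fun i hi => ?_
              rw [norm_mul, norm_pow, hc2 i]
              exact mul_le_mul_of_nonneg_left
                (pow_le_pow_right₀ hf1.le (Nat.le_sub_one_of_lt (Finset.mem_range.mp hi)))
                (norm_nonneg _)
          _ = _ := (Finset.sum_mul _ _ _).symm
      -- now divide
      have hcz : c ≤ ‖(Q.coeff n).eval z‖ := hR₀ z (le_trans (le_max_left _ _) hz)
      have hpow : ‖f z‖ ^ n = ‖f z‖ * ‖f z‖ ^ (n - 1) := by
        conv_lhs => rw [← Nat.succ_pred_eq_of_pos hn]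
        rw [pow_succ, Nat.pred_eq_sub_one]
        ring
      have hfpos : (0:ℝ) < ‖f z‖ ^ (n-1) := pow_pos (lt_trans one_pos hf1) _
      have step : c * ‖f z‖ ≤ S * ‖z‖ ^ m := by
        have h2 : c * (‖f z‖ * ‖f z‖ ^ (n-1)) ≤
            (∑ i ∈ Finset.range n, ‖(Q.coeff i).eval z‖) * ‖f z‖ ^ (n-1) := by
          rw [← hpow]
          calc c * ‖f z‖ ^ n ≤ ‖(Q.coeff n).eval z‖ * ‖f z‖ ^ n :=
                mul_le_mul_of_nonneg_right hcz (by positivity)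
            _ ≤ _ := key
        rw [← mul_assoc] at h2
        exact (le_of_mul_le_mul_right h2 hfpos).trans hT
      calc ‖f z‖ ≤ S * ‖z‖ ^ m / c := (le_div_iff₀' hc).mpr step
        _ = (S / c) * ‖z‖ ^ m := by ring
        _ ≤ (1 + S / c) * ‖z‖ ^ m := by nlinarith
end

section
/- Let 0 < r < R ≤ ∞, let F be holomorphic on the open disc of radius R, and suppose F vanishes at s distinct points of the closed disc of radius r. Then for every z with |z| ≤ r, |F(z)| ≤ |F|_{R'} · ((2rR')/(R'^2 + r^2))^{s} for any r < R' < R, where |F|_{R'} = sup_{|w| = R'} |F(w)|. In particular, log|F(z)| ≤ log|F|_{R'} − c_0 s with c_0 = log((R'^2 + r^2)/(2rR')) > 0. -/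
open Metric Complex

lemma blaschke_key (r s : ℝ) (hr : 0 < r) (hs : r ^ 2 < s)
    (a z : ℂ) (ha : ‖a‖ ≤ r) (hz : ‖z‖ ≤ r) :
    (s + r ^ 2) * ‖z - a‖ ≤
      2 * r * ‖(s : ℂ) - (starRingEnd ℂ) a * z‖ := by
  set α := ‖a‖ with hαd
  set β := ‖z‖ with hβd
  set x := (z * (starRingEnd ℂ) a).re with hxd
  have hα0 : 0 ≤ α := norm_nonneg a
  have hβ0 : 0 ≤ β := norm_nonneg z
  have hx : -(β * α) ≤ x := by
    have h1 : |x| ≤ ‖z * (starRingEnd ℂ) a‖ := Complex.abs_re_le_norm _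
    have h2 : ‖z * (starRingEnd ℂ) a‖ = β * α := by
      rw [norm_mul, Complex.norm_conj]
    nlinarith [neg_abs_le x]
  have h1 : ‖z - a‖ ^ 2 = β ^ 2 + α ^ 2 - 2 * x := by
    rw [Complex.sq_norm, Complex.normSq_sub, ← Complex.sq_norm z, ← Complex.sq_norm a]
  have h2 : ‖(s : ℂ) - (starRingEnd ℂ) a * z‖ ^ 2
      = s ^ 2 + α ^ 2 * β ^ 2 - 2 * s * x := by
    rw [Complex.sq_norm, Complex.normSq_sub, Complex.normSq_mul, Complex.normSq_conj,
      Complex.normSq_ofReal, ← Complex.sq_norm a, ← Complex.sq_norm z]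
    have : ((s : ℂ) * (starRingEnd ℂ) ((starRingEnd ℂ) a * z)).re = s * x := by
      simp only [map_mul, Complex.conj_conj, Complex.mul_re, Complex.mul_im,
        Complex.ofReal_re, Complex.ofReal_im, Complex.conj_re, Complex.conj_im, hxd]
      ring
    rw [this]; ring
  have hP : 0 ≤ 2 * r * (s + α * β) - (s + r ^ 2) * (α + β) := by
    nlinarith [mul_nonneg (sub_nonneg.2 ha) (sub_nonneg.2 hz),
      mul_nonneg (sub_nonneg.2 (hs.le)) (sub_nonneg.2 hz)]
  have hQ : 0 ≤ 2 * r * (s + α * β) + (s + r ^ 2) * (α + β) := by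
    nlinarith [mul_nonneg hα0 hβ0]
  have hsq : ((s + r ^ 2) * ‖z - a‖) ^ 2
      ≤ (2 * r * ‖(s : ℂ) - (starRingEnd ℂ) a * z‖) ^ 2 := by
    have expand : ((s + r ^ 2) * ‖z - a‖) ^ 2
        = (s + r ^ 2) ^ 2 * (β ^ 2 + α ^ 2 - 2 * x) := by rw [mul_pow, h1]
    have expand2 : (2 * r * ‖(s : ℂ) - (starRingEnd ℂ) a * z‖) ^ 2
        = 4 * r ^ 2 * (s ^ 2 + α ^ 2 * β ^ 2 - 2 * s * x) := by rw [mul_pow, h2]; ring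
    rw [expand, expand2]
    nlinarith [mul_nonneg hP hQ, mul_nonneg (by linarith : (0:ℝ) ≤ x + β * α) (sq_nonneg (s - r ^ 2))]
  have h2r : (0:ℝ) ≤ 2 * r * ‖(s : ℂ) - (starRingEnd ℂ) a * z‖ := by
    positivity
  exact le_of_sq_le_sq hsq h2r

lemma max_mod_base (r R' R : ℝ) (hr : 0 < r) (hrR' : r < R') (hR'R : R' < R)
    (F : ℂ → ℂ) (hF : DifferentiableOn ℂ F (Metric.ball (0 : ℂ) R))
    (z : ℂ) (hz : ‖z‖ ≤ r) :
    ‖F z‖ ≤ sSup ((fun w => ‖F w‖) '' Metric.sphere (0 : ℂ) R') := by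
  have h0R' : 0 < R' := hr.trans hrR'
  have hsub : closedBall (0 : ℂ) R' ⊆ ball (0 : ℂ) R := closedBall_subset_ball hR'R
  have hcl : closure (ball (0 : ℂ) R') = closedBall (0 : ℂ) R' := closure_ball 0 h0R'.ne'
  have hdc : DiffContOnCl ℂ F (ball (0 : ℂ) R') := by
    refine ⟨hF.mono (ball_subset_ball hR'R.le), ?_⟩
    rw [hcl]
    exact hF.continuousOn.mono hsub
  have hbdd : BddAbove ((fun w => ‖F w‖) '' Metric.sphere (0 : ℂ) R') := by
    apply (isCompact_sphere (0 : ℂ) R').bddAbove_image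
    exact continuous_norm.comp_continuousOn
      (hF.continuousOn.mono (sphere_subset_closedBall.trans hsub))
  have := Complex.norm_le_of_forall_mem_frontier_norm_le (isBounded_ball) hdc
    (C := sSup ((fun w => ‖F w‖) '' Metric.sphere (0 : ℂ) R'))
    (fun w hw => by
      rw [frontier_ball 0 h0R'.ne'] at hw
      exact le_csSup hbdd (Set.mem_image_of_mem _ hw))
    (z := z) (by rw [hcl]; exact mem_closedBall_zero_iff.2 (le_trans hz hrR'.le))
  exact this

lemma key_induction (r R' R : ℝ) (hr : 0 < r) (hrR' : r < R') (hR'R : R' < R) :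
    ∀ (S : Finset ℂ) (F : ℂ → ℂ), DifferentiableOn ℂ F (Metric.ball (0 : ℂ) R) →
      (↑S ⊆ Metric.closedBall (0 : ℂ) r) → (∀ a ∈ S, F a = 0) →
      ∀ z : ℂ, ‖z‖ ≤ r →
      ‖F z‖ ≤ (sSup ((fun w => ‖F w‖) '' Metric.sphere (0 : ℂ) R'))
        * (2 * r * R' / (R' ^ 2 + r ^ 2)) ^ S.card := by
  intro S
  induction S using Finset.induction_on with
  | empty =>
    intro F hF _ _ z hz
    simpa using max_mod_base r R' R hr hrR' hR'R F hF z hz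
  | @insert a S' haS' ih =>
    intro F hF hS hzero z hz
    have h0R' : 0 < R' := hr.trans hrR'
    have har : ‖a‖ ≤ r := by
      have := hS (Finset.mem_insert_self a S')
      rwa [Metric.mem_closedBall, Complex.dist_eq, sub_zero] at this
    have haR : a ∈ Metric.ball (0 : ℂ) R := by
      rw [mem_ball_zero_iff]
      exact lt_of_le_of_lt har (hrR'.trans hR'R)
    have hFa : F a = 0 := hzero a (Finset.mem_insert_self a S')
    set q : ℝ := 2 * r * R' / (R' ^ 2 + r ^ 2) with hq
    have hden : (0:ℝ) < R' ^ 2 + r ^ 2 := by positivity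
    have hq0 : 0 ≤ q := by positivity
    set G : ℂ → ℂ :=
      fun w => dslope F a w * ((((R' ^ 2 : ℝ) : ℂ) - (starRingEnd ℂ) a * w) / (R' : ℂ)) with hG
    have hGdiff : DifferentiableOn ℂ G (Metric.ball (0 : ℂ) R) := by
      have hd : DifferentiableOn ℂ (dslope F a) (Metric.ball (0 : ℂ) R) :=
        (differentiableOn_dslope (isOpen_ball.mem_nhds haR)).mpr hF
      exact hd.mul (((differentiable_const _).sub
        ((differentiable_id).const_mul _)).div_const _).differentiableOn
    have hGS : ↑S' ⊆ Metric.closedBall (0 : ℂ) r :=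
      fun b hb => hS (by exact_mod_cast Finset.mem_insert_of_mem hb)
    have hGzero : ∀ b ∈ S', G b = 0 := by
      intro b hb
      have hne : b ≠ a := fun h => haS' (h ▸ hb)
      have : dslope F a b = 0 := by
        rw [dslope_of_ne F hne]
        simp [slope, hFa, hzero b (Finset.mem_insert_of_mem hb)]
      simp [hG, this]
    have hFfac : ∀ w, F w = (w - a) * dslope F a w := by
      intro w
      have := sub_smul_dslope F a w
      rw [smul_eq_mul] at this
      rw [this, hFa, sub_zero]
    have henorm : ∀ w ∈ Metric.sphere (0 : ℂ) R',
        ‖G w‖ = ‖F w‖ := by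
      intro w hw
      have hwabs : ‖w‖ = R' := by
        rwa [mem_sphere_iff_norm, sub_zero] at hw
      have hwa : w ≠ a := by
        intro h; rw [h] at hwabs; exact absurd hwabs (by linarith [har])
      have hXX : (((R' ^ 2 : ℝ) : ℂ) - (starRingEnd ℂ) a * w)
          = (starRingEnd ℂ) (w - a) * w := by
        have hmc : ((R' ^ 2 : ℝ) : ℂ) = (starRingEnd ℂ) w * w := by
          rw [← Complex.normSq_eq_conj_mul_self, ← Complex.sq_norm, hwabs]
        rw [hmc, map_sub]; ring
      have hXabs : ‖((R' ^ 2 : ℝ) : ℂ) - (starRingEnd ℂ) a * w‖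
          = ‖w - a‖ * R' := by
        rw [hXX, norm_mul, Complex.norm_conj, hwabs]
      have hFw : ‖F w‖ = ‖w - a‖ * ‖dslope F a w‖ := by
        rw [hFfac w, norm_mul]
      have : ‖G w‖
          = ‖dslope F a w‖ * (‖w - a‖ * R') / R' := by
        rw [hG]
        simp only [norm_mul, norm_div, Complex.norm_real, Real.norm_eq_abs, abs_of_pos h0R', hXabs]
        ring
      rw [this, hFw]
      field_simp
    have himg : ((fun w => ‖G w‖) '' Metric.sphere (0 : ℂ) R')
        = ((fun w => ‖F w‖) '' Metric.sphere (0 : ℂ) R') :=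
      Set.image_congr henorm
    have hGle := ih G hGdiff hGS hGzero z hz
    rw [himg] at hGle
    -- Blaschke bound at z
    have hkey := blaschke_key r (R' ^ 2) hr (by nlinarith) a z har hz
    have hXz : ‖z - a‖ ≤ 2 * r * ‖((R' ^ 2 : ℝ) : ℂ)
        - (starRingEnd ℂ) a * z‖ / (R' ^ 2 + r ^ 2) := by
      rw [le_div_iff₀ hden]
      nlinarith [hkey]
    have hGz : ‖G z‖ = ‖dslope F a z‖
        * ‖((R' ^ 2 : ℝ) : ℂ) - (starRingEnd ℂ) a * z‖ / R' := by
      rw [hG]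
      simp only [norm_mul, norm_div, Complex.norm_real, Real.norm_eq_abs, abs_of_pos h0R']
      ring
    have hFz : ‖F z‖ ≤ q * ‖G z‖ := by
      rw [hFfac z, norm_mul, hGz, hq]
      have hD : 0 ≤ ‖dslope F a z‖ := norm_nonneg _
      have := mul_le_mul_of_nonneg_right hXz hD
      calc ‖z - a‖ * ‖dslope F a z‖
          ≤ (2 * r * ‖((R' ^ 2 : ℝ) : ℂ) - (starRingEnd ℂ) a * z‖
              / (R' ^ 2 + r ^ 2)) * ‖dslope F a z‖ := this
        _ = 2 * r * R' / (R' ^ 2 + r ^ 2) * (‖dslope F a z‖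
              * ‖((R' ^ 2 : ℝ) : ℂ) - (starRingEnd ℂ) a * z‖ / R') := by
            field_simp
    calc ‖F z‖ ≤ q * ‖G z‖ := hFz
      _ ≤ q * ((sSup ((fun w => ‖F w‖) '' Metric.sphere (0 : ℂ) R'))
            * q ^ S'.card) := mul_le_mul_of_nonneg_left hGle hq0
      _ = (sSup ((fun w => ‖F w‖) '' Metric.sphere (0 : ℂ) R'))
            * q ^ (insert a S').card := by
          rw [Finset.card_insert_of_notMem haS', pow_succ]; ring


theorem schwarz_many_zeros (r R : ℝ) (hr : 0 < r) (hrR : r < R) (F : ℂ → ℂ)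
    (hF : DifferentiableOn ℂ F (Metric.ball (0 : ℂ) R))
    (S : Finset ℂ) (hS : ↑S ⊆ Metric.closedBall (0 : ℂ) r)
    (hzero : ∀ a ∈ S, F a = 0) :
    ∀ R' : ℝ, r < R' → R' < R → ∀ z : ℂ, ‖z‖ ≤ r →
      ‖F z‖ ≤
        (sSup ((fun w => ‖F w‖) '' Metric.sphere (0 : ℂ) R')) *
          ((2 * r * R') / (R' ^ 2 + r ^ 2)) ^ S.card := by
  intro R' hrR' hR'R z hz
  exact key_induction r R' R hr hrR' hR'R S F hF hS hzero z hz
end
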